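/- Let M be a strongly base orderable matroid on a finite ground set S and let G = (S, E) be a simple graph on vertex set S. Define S' = {(v, e) : e ∈ E, v ∈ e} and the projection p : S' → S, p(v, e) = v, and let M' be a matroid on S' whose independent sets are exactly the sets I' ⊆ S' such that p is injective on I' and p(I') is independent in M. Then M' is strongly base orderable. -/

import Mathlib

open Finset

variable {α : Type*} [DecidableEq α]

/-- A matroid is strongly base orderable if for every pair of bases `I`, `J` there is a
bijection `π : I → J` such that for every `K ⊆ I`, the set `π(K) ∪ (I \ K)` is a base. -/
def Matroid.StronglyBaseOrderable {β : Type*} (M : Matroid β) : Prop :=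
  ∀ I J : Set β, M.IsBase I → M.IsBase J →
    ∃ π : β → β, Set.BijOn π I J ∧ ∀ K ⊆ I, M.IsBase (π '' K ∪ (I \ K))

/-- The ground set of the parity instance: one copy `(v, e)` of each vertex `v`
for every edge `e` of `G` incident to it. -/
def ParityGround (G : SimpleGraph α) : Set (α × Sym2 α) :=
  {p | p.2 ∈ G.edgeSet ∧ p.1 ∈ p.2}

section ChaseLemma

open Set

private lemma iter_cancel {β : Type*} {σ : β → β} {A : Set β} (hinj : Set.InjOn σ A) :
    ∀ i : ℕ, ∀ x y : β, (∀ m < i, σ^[m] x ∈ A) → (∀ m < i, σ^[m] y ∈ A) →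
      σ^[i] x = σ^[i] y → x = y := by
  intro i
  induction i with
  | zero => intro x y _ _ h; simpa using h
  | succ n ih =>
    intro x y hx hy h
    refine ih x y (fun m hm => hx m (hm.trans (Nat.lt_succ_self n)))
      (fun m hm => hy m (hm.trans (Nat.lt_succ_self n))) ?_
    rw [Function.iterate_succ_apply', Function.iterate_succ_apply'] at h
    exact hinj (hx n (Nat.lt_succ_self n)) (hy n (Nat.lt_succ_self n)) h

private lemma chase {β : Type*} (P : Matroid β) (σ : β → β) (A B C : Set β)
    (hA : A.Finite) (hbij : Set.BijOn σ A B) (hC : C ⊆ A ∩ B)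
    (hbase : ∀ K ⊆ A, P.IsBase (σ '' K ∪ (A \ K))) :
    ∃ π : β → β, Set.BijOn π (A \ C) (B \ C) ∧
      ∀ K ⊆ A \ C, P.IsBase (π '' K ∪ ((A \ C) \ K) ∪ C) := by
  classical
  have hCA : C ⊆ A := fun x hx => (hC hx).1
  -- existence of an exit
  have hex : ∀ v ∈ A \ C, ∃ k, σ^[k+1] v ∉ C := by
    intro v hv
    by_contra h
    push_neg at h
    have hitA : ∀ j, σ^[j] v ∈ A := by
      intro j
      cases j with
      | zero => exact hv.1
      | succ n => exact hCA (h n)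
    obtain ⟨i, -, j, -, hij, hfij⟩ :=
      Set.infinite_univ.exists_ne_map_eq_of_mapsTo (f := fun n : ℕ => σ^[n] v)
        (fun n _ => hitA n) hA
    have key : ∀ a b : ℕ, a < b → σ^[a] v = σ^[b] v → False := by
      intro a b hlt heq
      have h1 : σ^[a] (σ^[b - a] v) = σ^[a] v := by
        rw [← Function.iterate_add_apply]
        have hab : a + (b - a) = b := by omega
        rw [hab, ← heq]
      have h2 : σ^[b - a] v = v := by
        refine iter_cancel hbij.injOn a _ _ ?_ (fun m _ => hitA m) h1
        intro m _
        rw [← Function.iterate_add_apply]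
        exact hitA _
      have h3 : σ^[b - a] v ∈ C := by
        have hba : b - a = (b - a - 1) + 1 := by omega
        rw [hba]
        exact h (b - a - 1)
      rw [h2] at h3
      exact hv.2 h3
    rcases lt_or_gt_of_ne hij with h' | h'
    · exact key i j h' hfij
    · exact key j i h' hfij.symm
  -- the length of the chase
  let n : β → ℕ := fun v => if h : ∃ k, σ^[k+1] v ∉ C then Nat.find h else 0
  let π : β → β := fun v => σ^[n v + 1] v
  have hnspec : ∀ v ∈ A \ C, σ^[n v + 1] v ∉ C := by
    intro v hv
    have h := hex v hv
    simp only [n, dif_pos h]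
    exact Nat.find_spec h
  have hmid : ∀ v ∈ A \ C, ∀ j, 1 ≤ j → j ≤ n v → σ^[j] v ∈ C := by
    intro v hv j h1 h2
    have h := hex v hv
    simp only [n, dif_pos h] at h2
    by_contra hc
    have hle : Nat.find h ≤ j - 1 := Nat.find_le (by
      have hj : j - 1 + 1 = j := by omega
      rw [hj]; exact hc)
    omega
  have hiterA : ∀ v ∈ A \ C, ∀ j ≤ n v, σ^[j] v ∈ A := by
    intro v hv j hj
    cases j with
    | zero => exact hv.1
    | succ m => exact hCA (hmid v hv (m+1) (by omega) hj)
  have hπmem : ∀ v ∈ A \ C, π v ∈ B \ C := by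
    intro v hv
    refine ⟨?_, hnspec v hv⟩
    have h : π v = σ (σ^[n v] v) := Function.iterate_succ_apply' σ (n v) v
    rw [h]
    exact hbij.mapsTo (hiterA v hv (n v) le_rfl)
  have hπinj : Set.InjOn π (A \ C) := by
    have main : ∀ u v : β, u ∈ A \ C → v ∈ A \ C → n u ≤ n v → π u = π v → u = v := by
      intro u v hu hv hle heq
      set d := n v - n u with hd
      have h1 : σ^[n u + 1] (σ^[d] v) = σ^[n u + 1] u := by
        rw [← Function.iterate_add_apply]
        have hh : n u + 1 + d = n v + 1 := by omega
        rw [hh]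
        exact heq.symm
      have h2 : σ^[d] v = u := by
        refine iter_cancel hbij.injOn (n u + 1) _ _ ?_ ?_ h1
        · intro m hm
          rw [← Function.iterate_add_apply]
          exact hiterA v hv (m + d) (by omega)
        · intro m hm
          exact hiterA u hu m (by omega)
      by_cases hd0 : d = 0
      · rw [hd0] at h2
        exact h2.symm
      · exfalso
        have hc : σ^[d] v ∈ C := hmid v hv d (by omega) (by omega)
        rw [h2] at hc
        exact hu.2 hc
    intro u hu v hv heq
    rcases le_total (n u) (n v) with h | h
    · exact main u v hu hv h heq
    · exact (main v u hv hu h heq.symm).symm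
  have hBfin : B.Finite := hbij.image_eq ▸ hA.image σ
  have hCB : C ⊆ B := fun x hx => (hC hx).2
  have hcard : (A \ C).ncard = (B \ C).ncard := by
    have hCfin : C.Finite := hA.subset hCA
    rw [Set.ncard_diff hCA hCfin, Set.ncard_diff hCB hCfin, ← hbij.image_eq,
      Set.ncard_image_of_injOn hbij.injOn]
  have hπsurj : Set.SurjOn π (A \ C) (B \ C) := by
    have himg : π '' (A \ C) ⊆ B \ C := Set.image_subset_iff.mpr hπmem
    have him : π '' (A \ C) = B \ C := by
      apply Set.eq_of_subset_of_ncard_le himg ?_ hBfin.diff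
      rw [Set.ncard_image_of_injOn hπinj, hcard]
    exact him.symm.subset
  refine ⟨π, ⟨fun v hv => hπmem v hv, hπinj, hπsurj⟩, ?_⟩
  intro K hK
  set TK : Set β := {x | ∃ v ∈ K, ∃ j, 1 ≤ j ∧ j ≤ n v ∧ x = σ^[j] v} with hTKdef
  have hTKC : TK ⊆ C := by
    rintro x ⟨v, hvK, j, h1, h2, rfl⟩
    exact hmid v (hK hvK) j h1 h2
  have hKsA : K ∪ TK ⊆ A := by
    rintro x (hx | hx)
    · exact (hK hx).1
    · exact hCA (hTKC hx)
  have hb := hbase (K ∪ TK) hKsA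
  have heq : σ '' (K ∪ TK) ∪ (A \ (K ∪ TK)) = π '' K ∪ ((A \ C) \ K) ∪ C := by
    ext x
    simp only [Set.mem_union, Set.mem_image, Set.mem_diff]
    constructor
    · rintro (⟨y, hy, rfl⟩ | ⟨hxA, hxKs⟩)
      · rcases hy with hyK | hyTK
        · by_cases h0 : n y = 0
          · left; left
            exact ⟨y, hyK, by simp [π, h0]⟩
          · right
            have h : σ y = σ^[1] y := rfl
            rw [h]
            exact hmid y (hK hyK) 1 le_rfl (by omega)
        · obtain ⟨v, hvK, j, h1, h2, rfl⟩ := hyTK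
          by_cases hj : j = n v
          · left; left
            refine ⟨v, hvK, ?_⟩
            simp only [π]
            rw [← Function.iterate_succ_apply' σ j v, hj]
          · right
            have h : σ (σ^[j] v) = σ^[j+1] v := (Function.iterate_succ_apply' σ j v).symm
            rw [h]
            exact hmid v (hK hvK) (j+1) (by omega) (by omega)
      · by_cases hxC : x ∈ C
        · right; exact hxC
        · left; right
          exact ⟨⟨hxA, hxC⟩, fun h => hxKs (Or.inl h)⟩
    · rintro ((⟨v, hvK, rfl⟩ | ⟨⟨hxA, hxC⟩, hxK⟩) | hxC)
      · left
        refine ⟨σ^[n v] v, ?_, (Function.iterate_succ_apply' σ (n v) v).symm⟩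
        by_cases h0 : n v = 0
        · left; rw [h0]; simpa using hvK
        · right; exact ⟨v, hvK, n v, by omega, le_rfl, rfl⟩
      · right
        refine ⟨hxA, ?_⟩
        rintro (h | h)
        · exact hxK h
        · exact hxC (hTKC h)
      · by_cases hxKs : x ∈ K ∪ TK
        · rcases hxKs with h | h
          · exact absurd hxC (hK h).2
          · obtain ⟨v, hvK, j, h1, h2, rfl⟩ := h
            left
            refine ⟨σ^[j-1] v, ?_, ?_⟩
            · by_cases hj1 : j = 1
              · left; rw [hj1]; simpa using hvK
              · right; exact ⟨v, hvK, j - 1, by omega, by omega, rfl⟩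
            · rw [← Function.iterate_succ_apply' σ (j-1) v]
              congr 1
              omega
        · right
          exact ⟨hCA hxC, hxKs⟩
  rw [heq] at hb
  exact hb

end ChaseLemma

theorem parity_matroid_stronglyBaseOrderable
    (M : Matroid α) (S : Finset α) (hground : M.E = ↑S)
    (hsbo : M.StronglyBaseOrderable)
    (G : SimpleGraph α) (hGS : ∀ a b : α, G.Adj a b → a ∈ S)
    (M' : Matroid (α × Sym2 α)) (hM'ground : M'.E = ParityGround G)
    (hM'indep : ∀ I' : Set (α × Sym2 α), M'.Indep I' ↔
      I' ⊆ ParityGround G ∧ Set.InjOn Prod.fst I' ∧ M.Indep (Prod.fst '' I')) :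
    M'.StronglyBaseOrderable := by
  classical
  set T : Set α := {v | ∃ e ∈ G.edgeSet, v ∈ e} with hTdef
  have hTS : T ⊆ M.E := by
    rintro v ⟨e, he, hv⟩
    rw [hground]
    induction e with
    | h a b =>
      rw [SimpleGraph.mem_edgeSet] at he
      rcases Sym2.mem_iff.mp hv with rfl | rfl
      · exact hGS _ _ he
      · exact hGS _ _ he.symm
  have hTfin : T.Finite := (S.finite_toSet.subset (by rw [← hground]; exact hTS))
  set N := M.restrict T with hNdef
  have hNE : N.E = T := rfl
  -- projections of independent sets of M' land in T
  have hsubT : ∀ B' : Set (α × Sym2 α), B' ⊆ ParityGround G → Prod.fst '' B' ⊆ T := by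
    rintro B' hB' v ⟨x, hx, rfl⟩
    exact ⟨x.2, (hB' hx).1, (hB' hx).2⟩
  -- characterization of bases of M'
  have hbase_iff : ∀ B' : Set (α × Sym2 α),
      M'.IsBase B' ↔ M'.Indep B' ∧ N.IsBase (Prod.fst '' B') := by
    intro B'
    constructor
    · intro hB'
      have hind := hB'.indep
      obtain ⟨hPG, hinj, hMind⟩ := (hM'indep B').1 hind
      have hNi : N.Indep (Prod.fst '' B') :=
        Matroid.restrict_indep_iff.mpr ⟨hMind, hsubT B' hPG⟩
      refine ⟨hind, hNi.isBase_of_maximal ?_⟩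
      intro Y hY hBY
      by_contra hne
      obtain ⟨v, hvY, hvB⟩ : ∃ v, v ∈ Y ∧ v ∉ Prod.fst '' B' := by
        rcases Set.not_subset.mp (fun hsub => hne (hBY.antisymm hsub)) with ⟨v, hv1, hv2⟩
        exact ⟨v, hv1, hv2⟩
      obtain ⟨hYM, hYT⟩ := Matroid.restrict_indep_iff.mp hY
      obtain ⟨e, he, hve⟩ := hYT hvY
      have hveB : (v, e) ∉ B' := fun h => hvB ⟨(v, e), h, rfl⟩
      have hdep := hB'.insert_dep (e := (v, e)) ⟨by rw [hM'ground]; exact ⟨he, hve⟩, hveB⟩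
      refine hdep.not_indep ((hM'indep _).2 ⟨?_, ?_, ?_⟩)
      · rw [Set.insert_subset_iff]
        exact ⟨⟨he, hve⟩, hPG⟩
      · intro a ha b hb hab
        rcases Set.mem_insert_iff.mp ha with rfl | ha
        · rcases Set.mem_insert_iff.mp hb with rfl | hb
          · rfl
          · exact absurd ⟨b, hb, hab.symm⟩ hvB
        · rcases Set.mem_insert_iff.mp hb with rfl | hb
          · exact absurd ⟨a, ha, hab⟩ hvB
          · exact hinj ha hb hab
      · have himg : Prod.fst '' insert (v, e) B' = insert v (Prod.fst '' B') := by
          rw [Set.image_insert_eq]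
        rw [himg]
        exact hYM.subset (Set.insert_subset hvY hBY)
    · rintro ⟨hind, hNb⟩
      obtain ⟨hPG, hinj, hMind⟩ := (hM'indep B').1 hind
      refine hind.isBase_of_maximal ?_
      intro Y' hY' hBY'
      obtain ⟨hYPG, hYinj, hYM⟩ := (hM'indep Y').1 hY'
      have hNYi : N.Indep (Prod.fst '' Y') :=
        Matroid.restrict_indep_iff.mpr ⟨hYM, hsubT Y' hYPG⟩
      have himg : Prod.fst '' Y' ⊆ Prod.fst '' B' :=
        (Matroid.isBase_iff_maximal_indep.mp hNb).2 hNYi (Set.image_mono hBY')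
      apply hBY'.antisymm
      intro y hy
      obtain ⟨b, hb, hfb⟩ := himg ⟨y, hy, rfl⟩
      have hby : b = y := hYinj (hBY' hb) hy hfb
      rwa [← hby]
  -- N is strongly base orderable
  have hNsbo : ∀ I J : Set α, N.IsBase I → N.IsBase J →
      ∃ π, Set.BijOn π I J ∧ ∀ K ⊆ I, N.IsBase (π '' K ∪ (I \ K)) := by
    intro I J hI hJ
    obtain ⟨hIM, hIT⟩ := Matroid.restrict_indep_iff.mp hI.indep
    obtain ⟨hJM, hJT⟩ := Matroid.restrict_indep_iff.mp hJ.indep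
    have hImax := (Matroid.isBase_iff_maximal_indep.mp hI).2
    have hJmax := (Matroid.isBase_iff_maximal_indep.mp hJ).2
    obtain ⟨BI, hBI, hIBI⟩ := hIM.exists_isBase_superset
    have hBIfin : BI.Finite :=
      S.finite_toSet.subset (by rw [← hground]; exact hBI.subset_ground)
    have hBIT : BI ∩ T = I := by
      apply subset_antisymm
      · rintro x ⟨hxB, hxT⟩
        have hins : N.Indep (insert x I) :=
          Matroid.restrict_indep_iff.mpr ⟨hBI.indep.subset (Set.insert_subset hxB hIBI),
            Set.insert_subset hxT hIT⟩
        exact hImax hins (Set.subset_insert _ _) (Set.mem_insert x I)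
      · intro x hx; exact ⟨hIBI hx, hIT hx⟩
    obtain ⟨BJ, hBJ, hJBJ, hBJsub⟩ := hJM.exists_isBase_subset_union_isBase hBI
    set D := BI \ I with hDdef
    have hDT : ∀ x ∈ D, x ∉ T := by
      intro x hx hxT
      exact hx.2 (hBIT ▸ (⟨hx.1, hxT⟩ : x ∈ BI ∩ T))
    have hBJD : BJ \ J ⊆ D := by
      rintro x ⟨hxBJ, hxJ⟩
      have hxBI : x ∈ BI := by
        rcases hBJsub hxBJ with h | h
        · exact absurd h hxJ
        · exact h
      refine ⟨hxBI, fun hxI => ?_⟩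
      have hxT : x ∈ T := hIT hxI
      have hins : N.Indep (insert x J) :=
        Matroid.restrict_indep_iff.mpr ⟨hBJ.indep.subset (Set.insert_subset hxBJ hJBJ),
          Set.insert_subset hxT hJT⟩
      exact hxJ (hJmax hins (Set.subset_insert _ _) (Set.mem_insert x J))
    have hIJcard : I.encard = J.encard := hI.encard_eq_encard_of_isBase hJ
    have hBcard : BI.encard = BJ.encard := hBI.encard_eq_encard_of_isBase hBJ
    have hDfin : D.Finite := hBIfin.subset Set.diff_subset
    have hDntop : D.encard ≠ ⊤ := Set.encard_ne_top_iff.mpr hDfin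
    have hJntop : J.encard ≠ ⊤ := Set.encard_ne_top_iff.mpr (hTfin.subset hJT)
    have e1 : (BJ \ J).encard + J.encard = BJ.encard :=
      Set.encard_diff_add_encard_of_subset hJBJ
    have e2 : D.encard + I.encard = BI.encard :=
      Set.encard_diff_add_encard_of_subset hIBI
    have hDeq : BJ \ J = D := by
      apply Set.Finite.eq_of_subset_of_encard_le' hDfin hBJD
      have e3 : (BJ \ J).encard + J.encard = D.encard + J.encard := by
        rw [e1, ← hBcard, ← e2, hIJcard]
      rw [WithTop.add_right_cancel hJntop e3]
    have hBJ2 : BJ = J ∪ D := by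
      rw [← hDeq]
      exact (Set.union_diff_cancel hJBJ).symm
    obtain ⟨σ, hσbij, hσbase⟩ := hsbo BI BJ hBI hBJ
    have hDsub : D ⊆ BI ∩ BJ := by
      intro x hx
      exact ⟨hx.1, by rw [hBJ2]; exact Or.inr hx⟩
    obtain ⟨π, hπbij, hπbase⟩ := chase M σ BI BJ D hBIfin hσbij hDsub hσbase
    have hBID : BI \ D = I := Set.diff_diff_cancel_left hIBI
    have hBJD2 : BJ \ D = J := by
      rw [hBJ2, Set.union_diff_cancel_right]
      intro x hx
      exact (hDT x hx.2 (hJT hx.1)).elim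
    rw [hBID, hBJD2] at hπbij
    rw [hBID] at hπbase
    refine ⟨π, hπbij, ?_⟩
    intro K hKI
    have hb := hπbase K hKI
    set X := π '' K ∪ (I \ K) with hXdef
    have hXT : X ⊆ T := by
      rintro x (hx | hx)
      · obtain ⟨v, hv, rfl⟩ := hx
        exact hJT (hπbij.mapsTo (hKI hv))
      · exact hIT hx.1
    have hXD : Disjoint X D := by
      rw [Set.disjoint_left]
      intro x hx hxD
      exact hDT x hxD (hXT hx)
    have hXind : N.Indep X :=
      Matroid.restrict_indep_iff.mpr ⟨hb.indep.subset Set.subset_union_left, hXT⟩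
    have hXcard : X.encard = I.encard := by
      have e4 : X.encard + D.encard = BI.encard := by
        rw [← Set.encard_union_eq hXD]
        exact hb.encard_eq_encard_of_isBase hBI
      have e5 : I.encard + D.encard = BI.encard := by rw [add_comm]; exact e2
      exact WithTop.add_right_cancel hDntop (e4.trans e5.symm)
    obtain ⟨Y, hY, hXY⟩ := hXind.exists_isBase_superset
    have hYfin : Y.Finite := hTfin.subset hY.subset_ground
    have hXeqY : X = Y := by
      apply Set.Finite.eq_of_subset_of_encard_le' hYfin hXY
      rw [hY.encard_eq_encard_of_isBase hI, ← hXcard]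
    rw [hXeqY]
    exact hY
  -- main argument
  intro I' J' hI' hJ'
  obtain ⟨hI'ind, hIbase⟩ := (hbase_iff I').1 hI'
  obtain ⟨hJ'ind, hJbase⟩ := (hbase_iff J').1 hJ'
  obtain ⟨hIPG, hIinj, hIM⟩ := (hM'indep I').1 hI'ind
  obtain ⟨hJPG, hJinj, hJM⟩ := (hM'indep J').1 hJ'ind
  set I := Prod.fst '' I' with hIdef
  set J := Prod.fst '' J' with hJdef
  have hIT : I ⊆ T := hsubT I' hIPG
  have hJT : J ⊆ T := hsubT J' hJPG
  have hIfin : I.Finite := hTfin.subset hIT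
  -- a strongly-base-orderable bijection for N whose fixed points include I ∩ J
  obtain ⟨π1, hπ1bij, hπ1base⟩ := hNsbo I J hIbase hJbase
  obtain ⟨π0, hπ0bij, hπ0base⟩ := chase N π1 I J (I ∩ J) hIfin hπ1bij
    (fun x hx => ⟨hx.1, hx.2⟩) hπ1base
  rw [Set.diff_self_inter] at hπ0bij hπ0base
  have hJdiff : J \ (I ∩ J) = J \ I := by rw [Set.inter_comm, Set.diff_self_inter]
  rw [hJdiff] at hπ0bij
  set πh : α → α := fun v => if v ∈ J then v else π0 v with hπhdef
  have hπhI : ∀ v ∈ I, (v ∈ J ∧ πh v = v) ∨ (v ∉ J ∧ πh v ∈ J \ I) := by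
    intro v hv
    by_cases h : v ∈ J
    · left; exact ⟨h, if_pos h⟩
    · right
      refine ⟨h, ?_⟩
      have : πh v = π0 v := if_neg h
      rw [this]
      exact hπ0bij.mapsTo ⟨hv, h⟩
  have hπhbij : Set.BijOn πh I J := by
    refine ⟨?_, ?_, ?_⟩
    · intro v hv
      rcases hπhI v hv with ⟨h1, h2⟩ | ⟨h1, h2⟩
      · rw [h2]; exact h1
      · exact h2.1
    · intro u hu v hv heq
      rcases hπhI u hu with ⟨hu1, hu2⟩ | ⟨hu1, hu2⟩ <;>
        rcases hπhI v hv with ⟨hv1, hv2⟩ | ⟨hv1, hv2⟩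
      · rw [hu2, hv2] at heq; exact heq
      · exfalso; apply hv2.2; rw [← heq, hu2]; exact hu
      · exfalso; apply hu2.2; rw [heq, hv2]; exact hv
      · have heq' : π0 u = π0 v := by
          have h1 : πh u = π0 u := if_neg hu1
          have h2 : πh v = π0 v := if_neg hv1
          rw [← h1, ← h2]; exact heq
        exact hπ0bij.injOn ⟨hu, hu1⟩ ⟨hv, hv1⟩ heq'
    · intro w hw
      by_cases h : w ∈ I
      · exact ⟨w, h, if_pos hw⟩
      · obtain ⟨v, hv, hveq⟩ := hπ0bij.surjOn ⟨hw, h⟩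
        exact ⟨v, hv.1, by rw [show πh v = π0 v from if_neg hv.2, hveq]⟩
  have hπhbase : ∀ K ⊆ I, N.IsBase (πh '' K ∪ (I \ K)) := by
    intro K hK
    have hb := hπ0base (K \ J) (fun x hx => ⟨hK hx.1, hx.2⟩)
    have heqs : π0 '' (K \ J) ∪ ((I \ J) \ (K \ J)) ∪ (I ∩ J) = πh '' K ∪ (I \ K) := by
      ext x
      simp only [Set.mem_union, Set.mem_image, Set.mem_diff, Set.mem_inter_iff]
      constructor
      · rintro ((⟨v, hv, rfl⟩ | ⟨⟨hxI, hxJ⟩, hxK⟩) | ⟨hxI, hxJ⟩)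
        · left; exact ⟨v, hv.1, if_neg hv.2⟩
        · right; exact ⟨hxI, fun h => hxK ⟨h, hxJ⟩⟩
        · by_cases h : x ∈ K
          · left; exact ⟨x, h, if_pos hxJ⟩
          · right; exact ⟨hxI, h⟩
      · rintro (⟨v, hv, rfl⟩ | ⟨hxI, hxK⟩)
        · by_cases h : v ∈ J
          · have hh : πh v = v := if_pos h
            rw [hh]
            exact Or.inr ⟨hK hv, h⟩
          · have hh : πh v = π0 v := if_neg h
            rw [hh]
            exact Or.inl (Or.inl ⟨v, ⟨hv, h⟩, rfl⟩)
        · by_cases h : x ∈ J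
          · exact Or.inr ⟨hxI, h⟩
          · exact Or.inl (Or.inr ⟨⟨hxI, h⟩, fun hh => hxK hh.1⟩)
    rw [← heqs]
    exact hb
  -- lift everything back to M'
  rcases isEmpty_or_nonempty (α × Sym2 α) with hemp | hne
  · refine ⟨id, ?_, ?_⟩
    · have h1 : I' = ∅ := Set.eq_empty_of_isEmpty I'
      have h2 : J' = ∅ := Set.eq_empty_of_isEmpty J'
      rw [h1, h2]
      simp [Set.BijOn]
    · intro K hKsub
      have h1 : K = ∅ := Set.eq_empty_of_isEmpty K
      simpa [h1] using hI'
  set g : α → α × Sym2 α := Function.invFunOn Prod.fst J' with hgdef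
  have hgJ : ∀ w ∈ J, g w ∈ J' ∧ (g w).1 = w := by
    rintro w ⟨y, hy, rfl⟩
    exact Function.invFunOn_pos ⟨y, hy, rfl⟩
  have hgbij : Set.BijOn g J J' := by
    refine ⟨fun w hw => (hgJ w hw).1, ?_, ?_⟩
    · intro u hu v hv heq
      rw [← (hgJ u hu).2, ← (hgJ v hv).2, heq]
    · intro y hy
      refine ⟨y.1, ⟨y, hy, rfl⟩, ?_⟩
      have h1 := hgJ y.1 ⟨y, hy, rfl⟩
      exact hJinj h1.1 hy h1.2
  have hfstbij : Set.BijOn Prod.fst I' I := hIinj.bijOn_image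
  set Pf : α × Sym2 α → α × Sym2 α := fun x => g (πh x.1) with hPfdef
  have hPfbij : Set.BijOn Pf I' J' := hgbij.comp (hπhbij.comp hfstbij)
  refine ⟨Pf, hPfbij, ?_⟩
  intro K' hK'
  set K := Prod.fst '' K' with hKdef
  have hKI : K ⊆ I := Set.image_mono hK'
  have hfstPf : ∀ x ∈ K', (Pf x).1 = πh x.1 := by
    intro x hx
    exact (hgJ (πh x.1) (hπhbij.mapsTo ⟨x, hK' hx, rfl⟩)).2
  have hfstdiff : Prod.fst '' (I' \ K') = I \ K := by
    apply subset_antisymm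
    · rintro v ⟨x, ⟨hxI, hxK⟩, rfl⟩
      refine ⟨⟨x, hxI, rfl⟩, ?_⟩
      rintro ⟨y, hy, hyx⟩
      exact hxK (hIinj (hK' hy) hxI hyx ▸ hy)
    · rintro v ⟨⟨x, hxI, rfl⟩, hvK⟩
      exact ⟨x, ⟨hxI, fun h => hvK ⟨x, h, rfl⟩⟩, rfl⟩
  have himgU : Prod.fst '' (Pf '' K' ∪ (I' \ K')) = πh '' K ∪ (I \ K) := by
    rw [Set.image_union, hfstdiff]
    congr 1
    rw [hKdef, Set.image_image, Set.image_image]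
    exact Set.image_congr hfstPf
  have hNb : N.IsBase (πh '' K ∪ (I \ K)) := hπhbase K hKI
  have hPfK'J : Pf '' K' ⊆ J' := by
    rintro y ⟨x, hx, rfl⟩
    exact hPfbij.mapsTo (hK' hx)
  rw [hbase_iff]
  refine ⟨(hM'indep _).2 ⟨?_, ?_, ?_⟩, by rw [himgU]; exact hNb⟩
  · rintro x (hx | hx)
    · exact hJPG (hPfK'J hx)
    · exact hIPG hx.1
  · rintro a (ha | ha) b (hb | hb) hab
    · exact hJinj (hPfK'J ha) (hPfK'J hb) hab
    · exfalso
      obtain ⟨x, hx, rfl⟩ := ha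
      have h1 : (Pf x).1 = πh x.1 := hfstPf x hx
      have h2 : (Pf x).1 ∈ I \ K := by
        rw [← hfstdiff]
        exact ⟨b, hb, hab.symm⟩
      have hxK : x.1 ∈ K := ⟨x, hx, rfl⟩
      rw [h1] at h2
      rcases hπhI x.1 (hKI hxK) with ⟨hh1, hh2⟩ | ⟨hh1, hh2⟩
      · rw [hh2] at h2; exact h2.2 hxK
      · exact hh2.2 h2.1
    · exfalso
      obtain ⟨x, hx, rfl⟩ := hb
      have h1 : (Pf x).1 = πh x.1 := hfstPf x hx
      have h2 : (Pf x).1 ∈ I \ K := by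
        rw [← hfstdiff]
        exact ⟨a, ha, hab⟩
      have hxK : x.1 ∈ K := ⟨x, hx, rfl⟩
      rw [h1] at h2
      rcases hπhI x.1 (hKI hxK) with ⟨hh1, hh2⟩ | ⟨hh1, hh2⟩
      · rw [hh2] at h2; exact h2.2 hxK
      · exact hh2.2 h2.1
    · exact hIinj ha.1 hb.1 hab
  · rw [himgU]
    exact (Matroid.restrict_indep_iff.mp hNb.indep).1
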